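/- Let u, v be words over Fin n and j, k letters with j < k. Suppose u ++ [j] ++ v is canonical and every letter occurring in u is ≥ k. If c is canonical and c ~ filter≥k v, then u ++ [j] ++ c is also canonical. -/

import Mathlib

variable {n : ℕ}

/-- Generating relation of the Kiselman congruence on words over `Fin n`. -/
inductive KisStep : List (Fin n) → List (Fin n) → Prop
  | idem : ∀ (u v : List (Fin n)) (i : Fin n),
      KisStep (u ++ [i, i] ++ v) (u ++ [i] ++ v)
  | left : ∀ (u v : List (Fin n)) (i j : Fin n), i < j →
      KisStep (u ++ [i, j, i] ++ v) (u ++ [i, j] ++ v)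
  | right : ∀ (u v : List (Fin n)) (i j : Fin n), i < j →
      KisStep (u ++ [j, i, j] ++ v) (u ++ [i, j] ++ v)

/-- The Kiselman congruence: smallest equivalence relation containing `KisStep`. -/
def KisEquiv (x y : List (Fin n)) : Prop := Relation.EqvGen KisStep x y

/-- An infix `[i] ++ u ++ [i]` is special if `u` contains a letter `> i` and a letter `< i`. -/
def Special (i : Fin n) (u : List (Fin n)) : Prop :=
  (∃ j ∈ u, i < j) ∧ (∃ j ∈ u, j < i)

/-- A word is canonical if all its infixes of the form `[i] ++ u ++ [i]` are special. -/
def Canonical (w : List (Fin n)) : Prop :=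
  ∀ (i : Fin n) (u : List (Fin n)), ([i] ++ u ++ [i]) <:+: w → Special i u

/-- Delete all letters strictly smaller than `k`. -/
def filterGE (k : Fin n) (w : List (Fin n)) : List (Fin n) :=
  w.filter (fun a => decide (k ≤ a))

/-- `trunc i w` is the longest suffix of `w` with head `i`, or `[]` if `i ∉ w`. -/
def trunc (i : Fin n) : List (Fin n) → List (Fin n)
  | [] => []
  | a :: t => if a = i then a :: t else trunc i t

/-- Longest suffix of `w` whose head is `< k` (as a natural number), or `[]`. -/
def truncLtN (k : ℕ) : List (Fin n) → List (Fin n)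
  | [] => []
  | a :: t => if (a : ℕ) < k then a :: t else truncLtN k t

/-- `join u v = u⁺ ++ v`, where `u⁻` is the longest suffix of `u` that is a sublist of `v`. -/
def join : List (Fin n) → List (Fin n) → List (Fin n)
  | [], v => v
  | a :: t, v => if (a :: t).Sublist v then v else a :: join t v

/-- The local update function at vertex `i` of the update system `S_n^⋆`. -/
def Fstep (i : Fin n) (s : Fin n → List (Fin n)) : Fin n → List (Fin n) :=
  Function.update s i
    (i :: List.foldr join []
      ((((List.finRange n).filter (fun j => decide (i < j))).reverse).map s))

/-- The evolution induced by a word (rightmost letter acts first). -/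
def Fword (w : List (Fin n)) (s : Fin n → List (Fin n)) : Fin n → List (Fin n) :=
  w.foldr Fstep s

/-- The initial system state `⋆`. -/
def starState : Fin n → List (Fin n) := fun _ => []

namespace Stmt8Aux

inductive Tr : Type where
  | nil : Tr
  | node : List Tr → Tr

def gstep (a : Fin n) (s : Fin n → Tr) : Fin n → Tr :=
  Function.update s a
    (Tr.node (((List.finRange n).filter (fun j => decide (a < j))).map s))

def gword (w : List (Fin n)) (s : Fin n → Tr) : Fin n → Tr := w.foldr gstep s

def gS (w : List (Fin n)) : Fin n → Tr := gword w (fun _ => Tr.nil)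

lemma map_filt_congr {a : Fin n} {s s' : Fin n → Tr}
    (h : ∀ j, a < j → s j = s' j) :
    ((List.finRange n).filter (fun j => decide (a < j))).map s
      = ((List.finRange n).filter (fun j => decide (a < j))).map s' :=
  List.map_congr_left (fun j hj => h j (by simpa using (List.mem_filter.mp hj).2))

lemma gstep_self (a : Fin n) (s : Fin n → Tr) :
    gstep a s a = Tr.node (((List.finRange n).filter (fun j => decide (a < j))).map s) := by
  simp [gstep]

lemma gstep_ne {a b : Fin n} (hab : b ≠ a) (s : Fin n → Tr) : gstep a s b = s b := by
  simp [gstep, Function.update_of_ne hab]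

lemma gstep_idem (a : Fin n) (s : Fin n → Tr) : gstep a (gstep a s) = gstep a s := by
  funext b
  by_cases hb : b = a
  · subst hb
    rw [gstep_self, gstep_self]
    congr 1
    exact map_filt_congr (fun j hj => gstep_ne (ne_of_gt hj) s)
  · rw [gstep_ne hb, gstep_ne hb]

lemma gstep_aba {a b : Fin n} (hab : a < b) (s : Fin n → Tr) :
    gstep a (gstep b (gstep a s)) = gstep a (gstep b s) := by
  funext x
  by_cases hx : x = a
  · subst hx
    rw [gstep_self, gstep_self]
    congr 1
    refine map_filt_congr (fun j hj => ?_)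
    by_cases hjb : j = b
    · subst hjb
      rw [gstep_self, gstep_self]
      congr 1
      exact map_filt_congr (fun t ht => gstep_ne (ne_of_gt (lt_trans hab ht)) s)
    · rw [gstep_ne hjb, gstep_ne hjb, gstep_ne (ne_of_gt hj)]
  · rw [gstep_ne hx, gstep_ne hx]
    by_cases hxb : x = b
    · subst hxb
      rw [gstep_self, gstep_self]
      congr 1
      exact map_filt_congr (fun t ht => gstep_ne (ne_of_gt (lt_trans hab ht)) s)
    · rw [gstep_ne hxb, gstep_ne hxb, gstep_ne hx]

lemma gstep_bab {a b : Fin n} (hab : a < b) (s : Fin n → Tr) :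
    gstep b (gstep a (gstep b s)) = gstep a (gstep b s) := by
  funext x
  by_cases hxb : x = b
  · subst hxb
    rw [gstep_self]
    rw [gstep_ne (ne_of_gt hab), gstep_self]
    congr 1
    refine map_filt_congr (fun j hj => ?_)
    rw [gstep_ne (ne_of_gt (lt_trans hab hj)), gstep_ne (ne_of_gt hj)]
  · rw [gstep_ne hxb]


lemma gword_append (w₁ w₂ : List (Fin n)) (s : Fin n → Tr) :
    gword (w₁ ++ w₂) s = gword w₁ (gword w₂ s) := by
  simp [gword, List.foldr_append]

lemma gword_cons (a : Fin n) (w : List (Fin n)) (s : Fin n → Tr) :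
    gword (a :: w) s = gstep a (gword w s) := rfl

lemma gword_kisequiv {x y : List (Fin n)} (h : KisEquiv x y) (s : Fin n → Tr) :
    gword x s = gword y s := by
  induction h with
  | rel x y hxy =>
    cases hxy with
    | idem u v i =>
      rw [gword_append, gword_append, gword_append, gword_append]
      show gword u (gstep i (gstep i (gword v s))) = gword u (gstep i (gword v s))
      rw [gstep_idem]
    | left u v i j hij =>
      rw [gword_append, gword_append, gword_append, gword_append]
      show gword u (gstep i (gstep j (gstep i (gword v s))))
        = gword u (gstep i (gstep j (gword v s)))
      rw [gstep_aba hij]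
    | right u v i j hij =>
      rw [gword_append, gword_append, gword_append, gword_append]
      show gword u (gstep j (gstep i (gstep j (gword v s))))
        = gword u (gstep i (gstep j (gword v s)))
      rw [gstep_bab hij]
  | refl x => rfl
  | symm x y _ ih => exact ih.symm
  | trans x y z _ _ ih₁ ih₂ => exact ih₁.trans ih₂

lemma gword_not_mem {c : Fin n} {w : List (Fin n)} (h : c ∉ w) (s : Fin n → Tr) :
    gword w s c = s c := by
  induction w with
  | nil => rfl
  | cons a t ih =>
    rw [gword_cons, gstep_ne (fun hc => h (by rw [hc]; exact List.mem_cons_self))]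
    exact ih (fun hc => h (List.mem_cons_of_mem a hc))

lemma gword_mem {c : Fin n} {w : List (Fin n)} (h : c ∈ w) (s : Fin n → Tr) :
    ∃ l, gword w s c = Tr.node l := by
  induction w with
  | nil => exact absurd h List.not_mem_nil
  | cons a t ih =>
    rw [gword_cons]
    by_cases hca : c = a
    · subst hca; exact ⟨_, gstep_self c (gword t s)⟩
    · rw [gstep_ne hca]
      exact ih (by rcases List.mem_cons.mp h with h | h; exact absurd h hca; exact h)


/-- `Good c w`: some occurrence of `c` in `w` has no greater letter before it. -/
def Good (c : Fin n) (w : List (Fin n)) : Prop :=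
  ∃ q r, w = q ++ [c] ++ r ∧ ∀ z ∈ q, ¬ c < z

/-- Upper-canonical: between any two equal letters there is a strictly greater one. -/
def UC (w : List (Fin n)) : Prop :=
  ∀ (z : Fin n) (b : List (Fin n)), ([z] ++ b ++ [z]) <:+: w → ∃ t ∈ b, z < t

lemma UC_of_infix {w r : List (Fin n)} (h : UC w) (hr : r <:+: w) : UC r :=
  fun z b hi => h z b (hi.trans hr)

lemma map_eq_pointwise {α β : Type*} {f g : α → β} :
    ∀ {l : List α}, l.map f = l.map g → ∀ x ∈ l, f x = g x := by
  intro l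
  induction l with
  | nil => intro _ x hx; exact absurd hx List.not_mem_nil
  | cons a t ih =>
    intro h x hx
    simp only [List.map_cons, List.cons.injEq] at h
    rcases List.mem_cons.mp hx with rfl | hx
    · exact h.1
    · exact ih h.2 x hx

lemma first_occ {c : Fin n} : ∀ {w : List (Fin n)}, c ∈ w →
    ∃ q r, w = q ++ [c] ++ r ∧ c ∉ q := by
  intro w
  induction w with
  | nil => intro h; exact absurd h List.not_mem_nil
  | cons a t ih =>
    intro h
    by_cases hca : a = c
    · exact ⟨[], t, by rw [hca]; rfl, List.not_mem_nil⟩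
    · have hct : c ∈ t := by
        rcases List.mem_cons.mp h with h1 | h1
        · exact absurd h1.symm hca
        · exact h1
      rcases ih hct with ⟨q, r, hqr, hcq⟩
      exact ⟨a :: q, r, by rw [hqr]; rfl,
        by simp only [List.mem_cons, not_or]; exact ⟨fun hc => hca hc.symm, hcq⟩⟩

/-- L1: if some occurrence of `c` has no greater letter before it,
then `gstep c` fixes the state of `w`. -/
lemma gstep_fix_aux {c : Fin n} : ∀ (q : List (Fin n)) (σ : Fin n → Tr),
    (∀ z ∈ q, ¬ c < z) → gstep c σ = σ → gstep c (gword q σ) = gword q σ := by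
  intro q
  induction q with
  | nil => intro σ _ h; exact h
  | cons a t ih =>
    intro σ hq hσ
    have ht : gstep c (gword t σ) = gword t σ :=
      ih σ (fun z hz => hq z (List.mem_cons_of_mem a hz)) hσ
    rw [gword_cons]
    by_cases hac : a = c
    · subst hac; exact gstep_idem a (gword t σ)
    · have hlt : a < c :=
        lt_of_le_of_ne (not_lt.mp (hq a List.mem_cons_self)) hac
      funext x
      by_cases hx : x = c
      · rw [hx, gstep_self]
        have h1 : ((List.finRange n).filter (fun j => decide (c < j))).map
              (gstep a (gword t σ))
            = ((List.finRange n).filter (fun j => decide (c < j))).map (gword t σ) :=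
          map_filt_congr (fun j hj => gstep_ne (ne_of_gt (lt_trans hlt hj)) _)
        rw [h1, gstep_ne (show (c : Fin n) ≠ a from fun h => hac h.symm)]
        have h2 := congrFun ht c
        rw [gstep_self] at h2
        exact h2
      · rw [gstep_ne hx]

lemma L1 {c : Fin n} {w : List (Fin n)} (h : Good c w) : gstep c (gS w) = gS w := by
  rcases h with ⟨q, r, rfl, hq⟩
  have : gS (q ++ [c] ++ r) = gword q (gstep c (gword r (fun _ => Tr.nil))) := by
    rw [gS, gword_append, gword_append]; rfl
  rw [this]
  exact gstep_fix_aux q _ hq (gstep_idem c _)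


lemma node_ne_nil (l : List Tr) : Tr.node l ≠ Tr.nil := fun h => Tr.noConfusion h

lemma L2 : ∀ (N : ℕ) (c : Fin n) (w : List (Fin n)), n - (c : ℕ) ≤ N → UC w →
    ¬ Good c w → gstep c (gS w) ≠ gS w := by
  intro N
  induction N with
  | zero =>
    intro c w hN _ _
    have := c.isLt
    omega
  | succ N ih =>
    intro c w hN hUC hG hfix
    by_cases hcw : c ∈ w
    · rcases first_occ hcw with ⟨q, r, rfl, hcq⟩
      have hzq : ∃ z ∈ q, c < z := by
        by_contra hno
        push_neg at hno
        exact hG ⟨q, r, rfl, fun z hz => not_lt.mpr (hno z hz)⟩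
      obtain ⟨c', hcc', hc'q, hmax⟩ :
          ∃ c', c < c' ∧ c' ∈ q ∧ ∀ z ∈ q, c < z → z ≤ c' := by
        classical
        rcases hzq with ⟨z₀, hz₀, hcz₀⟩
        have hFne : (q.toFinset.filter (fun z => c < z)).Nonempty :=
          ⟨z₀, Finset.mem_filter.mpr ⟨List.mem_toFinset.mpr hz₀, hcz₀⟩⟩
        refine ⟨(q.toFinset.filter (fun z => c < z)).max' hFne, ?_, ?_, ?_⟩
        · exact (Finset.mem_filter.mp (Finset.max'_mem _ hFne)).2
        · exact List.mem_toFinset.mp (Finset.mem_filter.mp (Finset.max'_mem _ hFne)).1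
        · intro z hz hcz
          exact Finset.le_max' _ z (Finset.mem_filter.mpr ⟨List.mem_toFinset.mpr hz, hcz⟩)
      set τ := gword r (fun _ => Tr.nil) with hτdef
      have hSw : gS (q ++ [c] ++ r) = gword q (gstep c τ) := by
        rw [gS, gword_append, gword_append]; rfl
      have hSwc : gS (q ++ [c] ++ r) c = gstep c τ c := by
        rw [hSw]; exact gword_not_mem hcq _
      have hstar : ∀ j, c < j → gS (q ++ [c] ++ r) j = τ j := by
        have h0 := congrFun hfix c
        rw [gstep_self, hSwc, gstep_self] at h0
        have h1 : ((List.finRange n).filter (fun j => decide (c < j))).map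
              (gS (q ++ [c] ++ r))
            = ((List.finRange n).filter (fun j => decide (c < j))).map τ := by
          injection h0
        intro j hj
        exact map_eq_pointwise h1 j
          (List.mem_filter.mpr ⟨List.mem_finRange j, decide_eq_true hj⟩)
      by_cases hc'r : c' ∈ r
      · rcases List.append_of_mem hc'q with ⟨q₂, q₃, rfl⟩
        have hGood : Good c' ((q₂ ++ c' :: q₃) ++ [c] ++ r) := by
          refine ⟨q₂, q₃ ++ [c] ++ r, by simp, ?_⟩
          intro z hz hc'z
          have hzq' : z ∈ q₂ ++ c' :: q₃ := List.mem_append.mpr (Or.inl hz)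
          exact absurd hc'z (not_lt.mpr (hmax z hzq' (lt_trans hcc' hc'z)))
        have hfix' : gstep c' (gS ((q₂ ++ c' :: q₃) ++ [c] ++ r))
            = gS ((q₂ ++ c' :: q₃) ++ [c] ++ r) := L1 hGood
        have hfixτ : gstep c' τ = τ := by
          funext x
          by_cases hx : x = c'
          · rw [hx, gstep_self]
            have e1 : ((List.finRange n).filter (fun j => decide (c' < j))).map τ
                = ((List.finRange n).filter (fun j => decide (c' < j))).map
                    (gS ((q₂ ++ c' :: q₃) ++ [c] ++ r)) :=
              map_filt_congr (fun j hj => (hstar j (lt_trans hcc' hj)).symm)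
            rw [e1]
            have h2 := congrFun hfix' c'
            rw [gstep_self] at h2
            rw [h2]
            exact hstar c' hcc'
          · rw [gstep_ne hx]
        have hnG : ¬ Good c' r := by
          rintro ⟨q₄, r₄, rfl, hq₄⟩
          have hinf : ([c'] ++ (q₃ ++ [c] ++ q₄) ++ [c'])
              <:+: ((q₂ ++ c' :: q₃) ++ [c] ++ (q₄ ++ [c'] ++ r₄)) :=
            ⟨q₂, r₄, by simp⟩
          rcases hUC c' _ hinf with ⟨z, hz, hc'z⟩
          have hz' : z ∈ q₃ ∨ z = c ∨ z ∈ q₄ := by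
            simpa using hz
          rcases hz' with hz3 | rfl | hz4
          · have hzq' : z ∈ q₂ ++ c' :: q₃ := by simp [hz3]
            exact absurd hc'z (not_lt.mpr (hmax z hzq' (lt_trans hcc' hc'z)))
          · exact absurd hc'z (not_lt.mpr (le_of_lt hcc'))
          · exact absurd hc'z (hq₄ z hz4)
        have hUCr : UC r :=
          UC_of_infix hUC ⟨(q₂ ++ c' :: q₃) ++ [c], [], by simp⟩
        have hle : n - (c' : ℕ) ≤ N := by
          have h3 : (c : ℕ) < (c' : ℕ) := hcc'
          have := c.isLt
          omega
        exact ih c' r hle hUCr hnG hfixτ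
      · have h1 : gS (q ++ [c] ++ r) c' = τ c' := hstar c' hcc'
        have h2 : τ c' = Tr.nil := gword_not_mem hc'r _
        have hc'w : c' ∈ q ++ [c] ++ r := by simp [hc'q]
        rcases gword_mem hc'w (fun _ => Tr.nil) with ⟨l, hl⟩
        rw [show gS (q ++ [c] ++ r) c' = gword (q ++ [c] ++ r) (fun _ => Tr.nil) c' from rfl,
          hl, h2] at h1
        exact node_ne_nil l h1
    · have h1 : gS w c = Tr.nil := gword_not_mem hcw _
      have h2 := congrFun hfix c
      rw [gstep_self, h1] at h2
      exact node_ne_nil _ h2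


lemma mem_kisequiv {x y : List (Fin n)} (h : KisEquiv x y) (a : Fin n) : a ∈ x ↔ a ∈ y := by
  induction h with
  | rel x y hxy => cases hxy <;> simp [List.mem_append] <;> tauto
  | refl x => exact Iff.rfl
  | symm _ _ _ ih => exact ih.symm
  | trans _ _ _ _ _ ih₁ ih₂ => exact ih₁.trans ih₂

lemma infix_split {α : Type*} {s x y X Y : List α} (h : x ++ s ++ y = X ++ Y) :
    s <:+: X ∨ s <:+: Y ∨
      ∃ s₁ s₂, s = s₁ ++ s₂ ∧ s₁ ≠ [] ∧ s₂ ≠ [] ∧ x ++ s₁ = X ∧ s₂ ++ y = Y := by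
  have h' : x ++ (s ++ y) = X ++ Y := by simpa [List.append_assoc] using h
  rcases List.append_eq_append_iff.mp h' with ⟨a, ha1, ha2⟩ | ⟨b, hb1, hb2⟩
  · rcases List.append_eq_append_iff.mp ha2 with ⟨a', ha1', ha2'⟩ | ⟨c', hc1, hc2⟩
    · left
      exact ⟨x, a', by rw [ha1, ha1']; simp [List.append_assoc]⟩
    · rcases eq_or_ne a [] with rfl | hane
      · right; left
        refine ⟨[], y, ?_⟩
        simp only [List.nil_append]
        rw [hc1]; simpa using hc2.symm
      · rcases eq_or_ne c' [] with rfl | hcne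
        · left
          refine ⟨x, [], ?_⟩
          rw [ha1, hc1]; simp
        · right; right
          exact ⟨a, c', hc1, hane, hcne, ha1.symm, hc2.symm⟩
  · right; left
    exact ⟨b, y, by rw [hb2]; simp [List.append_assoc]⟩

lemma filter_split {α : Type*} {p : α → Bool} :
    ∀ {l a : List α} {x : α} {r : List α}, l.filter p = a ++ x :: r →
      ∃ A R, l = A ++ x :: R ∧ A.filter p = a ∧ R.filter p = r := by
  intro l
  induction l with
  | nil =>
    intro a x r h
    simp only [List.filter_nil] at h
    exact absurd h.symm (List.append_ne_nil_of_right_ne_nil a (List.cons_ne_nil x r))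
  | cons hd t ih =>
    intro a x r h
    by_cases hp : p hd = true
    · rw [List.filter_cons_of_pos hp] at h
      cases a with
      | nil =>
        simp only [List.nil_append, List.cons.injEq] at h
        exact ⟨[], t, by rw [h.1]; rfl, by simp, h.2⟩
      | cons a0 a' =>
        simp only [List.cons_append, List.cons.injEq] at h
        rcases ih h.2 with ⟨A, R, rfl, hA, hR⟩
        exact ⟨hd :: A, R, rfl, by rw [List.filter_cons_of_pos hp, hA, h.1], hR⟩
    · rw [List.filter_cons_of_neg hp] at h
      rcases ih h with ⟨A, R, rfl, hA, hR⟩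
      exact ⟨hd :: A, R, rfl, by rw [List.filter_cons_of_neg hp, hA], hR⟩

end Stmt8Aux


open Stmt8Aux

set_option linter.unusedVariables false

/-- If `u ++ [j] ++ v` is canonical, all letters of `u` are `≥ k`, and `j < k`, then
`u ++ [j] ++ Can (filterGE k v)` is also canonical. -/
theorem stmt_8 {n : ℕ} (u v c : List (Fin n)) (j k : Fin n) (hjk : j < k)
    (hcan : Canonical (u ++ [j] ++ v)) (hu : ∀ a ∈ u, k ≤ a)
    (hc : Canonical c) (hcv : KisEquiv c (filterGE k v)) :
    Canonical (u ++ [j] ++ c) := by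
  classical
  intro i w' hinf
  rcases hinf with ⟨x, y, hxy⟩
  have hxy' : x ++ ([i] ++ w' ++ [i]) ++ y = (u ++ [j]) ++ c := by
    rw [hxy]
  rcases infix_split hxy' with hX | hY | ⟨s₁, s₂, hs, hs₁ne, hs₂ne, hs₁, hs₂⟩
  · exact hcan i w' (hX.trans ⟨[], v, by simp [List.append_assoc]⟩)
  · exact hc i w' hY
  · have memc : ∀ a, a ∈ c → k ≤ a := by
      intro a ha
      have h1 : a ∈ filterGE k v := (mem_kisequiv hcv a).mp ha
      exact of_decide_eq_true (List.mem_filter.mp h1).2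
    obtain ⟨s₁', rfl, htail⟩ : ∃ s₁', s₁ = i :: s₁' ∧ w' ++ [i] = s₁' ++ s₂ := by
      cases s₁ with
      | nil => exact absurd rfl hs₁ne
      | cons h0 t0 =>
        have hs' : i :: (w' ++ [i]) = h0 :: (t0 ++ s₂) := by simpa using hs
        simp only [List.cons.injEq] at hs'
        exact ⟨t0, by rw [hs'.1], hs'.2⟩
    obtain ⟨s₂c, rfl, hw'⟩ : ∃ s₂c, s₂ = s₂c ++ [i] ∧ w' = s₁' ++ s₂c := by
      rcases List.eq_nil_or_concat s₂ with rfl | ⟨s₂c, b2, rfl⟩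
      · exact absurd rfl hs₂ne
      · have htail' : w' ++ [i] = (s₁' ++ s₂c) ++ [b2] := by
          rw [htail]; simp [List.append_assoc]
        obtain ⟨hw, hib⟩ := List.append_inj' htail' (by simp)
        have hbi : b2 = i := by simpa using hib.symm
        exact ⟨s₂c, by simp [hbi], hw⟩
    have hic : i ∈ c := by rw [← hs₂]; simp
    have ki : k ≤ i := memc i hic
    have hji : j < i := lt_of_lt_of_le hjk ki
    rcases List.eq_nil_or_concat s₁' with rfl | ⟨s₁'', lastel, rfl⟩
    · have h2 := (List.append_inj' hs₁ (by simp)).2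
      have : i = j := by simpa using h2
      exact absurd this (ne_of_gt hji)
    · have hs₁'' : (x ++ i :: s₁'') ++ [lastel] = u ++ [j] := by
        rw [← hs₁]; simp [List.concat_eq_append, List.append_assoc]
      obtain ⟨hueq, hlj⟩ := List.append_inj' hs₁'' (by simp)
      have hlastel : lastel = j := by simpa using hlj
      have hw2 : w' = s₁'' ++ [j] ++ s₂c := by
        rw [hw', hlastel]; simp [List.concat_eq_append, List.append_assoc]
      constructor
      · -- ∃ m ∈ w', i < m
        by_contra hno
        push_neg at hno
        have nbig1 : ∀ m ∈ s₁'', ¬ i < m := by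
          intro m hm
          exact not_lt.mpr (hno m (by rw [hw2]; simp [hm]))
        have nbig2 : ∀ m ∈ s₂c, ¬ i < m := by
          intro m hm
          exact not_lt.mpr (hno m (by rw [hw2]; simp [hm]))
        have hGoodC : Good i c :=
          ⟨s₂c, y, by rw [← hs₂], nbig2⟩
        have hA : gstep i (gS c) = gS c := L1 hGoodC
        have hSc : gS c = gS (filterGE k v) := gword_kisequiv hcv _
        have hifv : i ∈ filterGE k v := (mem_kisequiv hcv i).mp hic
        have hiv : i ∈ v := List.mem_of_mem_filter hifv
        rcases first_occ hiv with ⟨V₁, V₂, hveq, hiV₁⟩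
        have sp := hcan i (s₁'' ++ [j] ++ V₁)
          ⟨x, V₂, by rw [← hueq, hveq]; simp [List.append_assoc]⟩
        rcases sp.1 with ⟨m, hmmem, him⟩
        have hmV₁ : m ∈ V₁ := by
          have hm' : m ∈ s₁'' ∨ m = j ∨ m ∈ V₁ := by simpa using hmmem
          rcases hm' with h1 | rfl | h1
          · exact absurd him (nbig1 m h1)
          · exact absurd him (not_lt.mpr (le_of_lt hji))
          · exact h1
        have hd_eq : filterGE k v = filterGE k V₁ ++ [i] ++ filterGE k V₂ := by
          rw [hveq]
          simp [filterGE, List.filter_append, List.filter_cons, ki]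
        have hmD : m ∈ filterGE k V₁ :=
          List.mem_filter.mpr ⟨hmV₁, decide_eq_true (le_trans ki (le_of_lt him))⟩
        have hiD : i ∉ filterGE k V₁ := fun h => hiV₁ (List.mem_of_mem_filter h)
        have hnGd : ¬ Good i (filterGE k v) := by
          rintro ⟨q, r, hqr, hq⟩
          rw [hd_eq] at hqr
          have h' : q ++ ([i] ++ r) = filterGE k V₁ ++ ([i] ++ filterGE k V₂) := by
            simpa [List.append_assoc] using hqr.symm
          rcases List.append_eq_append_iff.mp h' with ⟨a, ha1, ha2⟩ | ⟨b, hb1, hb2⟩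
          · cases a with
            | nil =>
              have hqD : q = filterGE k V₁ := by simpa using ha1.symm
              exact (hq m (by rw [hqD]; exact hmD)) him
            | cons a0 a' =>
              have ha0 : i = a0 := by
                have := ha2
                simp only [List.cons_append, List.singleton_append, List.cons.injEq] at this
                exact this.1
              exact hiD (by rw [ha1, ← ha0]; simp)
          · exact (hq m (by rw [hb1]; simp [hmD])) him
        have hUCd : UC (filterGE k v) := by
          intro z b hzb
          rcases hzb with ⟨a, e, hae⟩
          have hz_mem : z ∈ filterGE k v := by rw [← hae]; simp
          have hkz : k ≤ z := of_decide_eq_true (List.mem_filter.mp hz_mem).2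
          have hfe : v.filter (fun a => decide (k ≤ a)) = a ++ z :: (b ++ z :: e) := by
            rw [show v.filter (fun a => decide (k ≤ a)) = filterGE k v from rfl, ← hae]
            simp [List.append_assoc]
          rcases filter_split hfe with ⟨A, R, hvAR, hA2, hR⟩
          rcases filter_split hR with ⟨B, E, hRBE, hB, hE⟩
          have hvcan : Canonical v := fun z' b' hib =>
            hcan z' b' (hib.trans ⟨u ++ [j], [], by simp [List.append_assoc]⟩)
          have sp2 := hvcan z B ⟨A, E, by rw [hvAR, hRBE]; simp [List.append_assoc]⟩
          rcases sp2.1 with ⟨t, htB, hzt⟩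
          refine ⟨t, ?_, hzt⟩
          rw [← hB]
          exact List.mem_filter.mpr ⟨htB, decide_eq_true (le_trans hkz (le_of_lt hzt))⟩
        have hB2 := L2 n i (filterGE k v) (by omega) hUCd hnGd
        exact hB2 (by rw [← hSc]; exact hA)
      · exact ⟨j, by rw [hw2]; simp, hji⟩
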